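/- arXiv:2406.10369 — 11 statements merged into one kernel-verified Lean document; each statement's English description precedes it below -/
import Mathlib

section
/- If G and G' are IOD graphs with crossover compatible IO partitions (Ψ,Ω) and (Ψ',Ω'), then any crossover child C produced from them is itself an IOD graph: its input set I and output set O' are disjoint subsets of its node set Ψ ∪ Ω', no edge of C ends at a node of I, and no edge of C starts at a node of O'. -/
/-- An Input/Output Directed (IOD) graph: a set of nodes `N` inside a common
vertex type `V`, a set of directed edges `E ⊆ N × N`, and disjoint subsets
`I, O ⊆ N` (inputs and outputs) such that no edge ends at a node of `I`
and no edge starts at a node of `O`. -/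
structure IODGraph (V : Type) where
  N : Set V
  E : Set (V × V)
  I : Set V
  O : Set V
  I_sub : I ⊆ N
  O_sub : O ⊆ N
  disjIO : Disjoint I O
  E_mem : ∀ e ∈ E, e.1 ∈ N ∧ e.2 ∈ N
  no_into_I : ∀ e ∈ E, e.2 ∉ I
  no_outof_O : ∀ e ∈ E, e.1 ∉ O

namespace IODGraph

variable {V : Type}

/-- `G.Reach a b`: there is a directed path (possibly trivial) from `a` to `b` in `G`. -/
def Reach (G : IODGraph V) : V → V → Prop :=
  Relation.ReflTransGen (fun x y => (x, y) ∈ G.E)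

/-- Reachability by a directed path lying entirely within the set `S`. -/
def ReachWithin (G : IODGraph V) (S : Set V) : V → V → Prop :=
  Relation.ReflTransGen (fun x y => (x, y) ∈ G.E ∧ x ∈ S ∧ y ∈ S)

/-- `n` lies on a directed path from some input to some output. -/
def OnIOPath (G : IODGraph V) (n : V) : Prop :=
  ∃ i ∈ G.I, ∃ o ∈ G.O, G.Reach i n ∧ G.Reach n o

/-- The no dangling nodes condition: every intermediate node lies on a
directed path from some input to some output. -/
def NoDangling (G : IODGraph V) : Prop :=
  ∀ n ∈ G.N \ (G.I ∪ G.O), G.OnIOPath n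

/-- Partially informative: a path from some input to some output. -/
def PartiallyInformative (G : IODGraph V) : Prop :=
  ∃ i ∈ G.I, ∃ o ∈ G.O, G.Reach i o

/-- Very informative: from every input there is a path to some output. -/
def VeryInformative (G : IODGraph V) : Prop :=
  ∀ i ∈ G.I, ∃ o ∈ G.O, G.Reach i o

/-- Fully informative: for every input and every output there is a path. -/
def FullyInformative (G : IODGraph V) : Prop :=
  ∀ i ∈ G.I, ∀ o ∈ G.O, G.Reach i o

/-- Non-informative: no path from any input to any output. -/
def NonInformative (G : IODGraph V) : Prop :=
  ∀ i ∈ G.I, ∀ o ∈ G.O, ¬ G.Reach i o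

/-- Partially actionable: a path from some input to some output. -/
def PartiallyActionable (G : IODGraph V) : Prop :=
  ∃ i ∈ G.I, ∃ o ∈ G.O, G.Reach i o

/-- Very actionable: for every output there is a path from some input to it. -/
def VeryActionable (G : IODGraph V) : Prop :=
  ∀ o ∈ G.O, ∃ i ∈ G.I, G.Reach i o

/-- Fully actionable: for every input and every output there is a path. -/
def FullyActionable (G : IODGraph V) : Prop :=
  ∀ i ∈ G.I, ∀ o ∈ G.O, G.Reach i o

/-- An IO partition `(Ψ, Ω)` of the node set of `G`, with `I ⊆ Ψ` and `O ⊆ Ω`. -/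
structure IOPartition (G : IODGraph V) where
  Psi : Set V
  Om : Set V
  union_eq : Psi ∪ Om = G.N
  disj : Disjoint Psi Om
  I_sub : G.I ⊆ Psi
  O_sub : G.O ⊆ Om

/-- Forward links of an IO partition: edges from `Ψ` to `Ω`. -/
def Fwd (G : IODGraph V) (P : IOPartition G) : Set (V × V) :=
  {e | e ∈ G.E ∧ e.1 ∈ P.Psi ∧ e.2 ∈ P.Om}

/-- Backward links of an IO partition: edges from `Ω` to `Ψ`. -/
def Bwd (G : IODGraph V) (P : IOPartition G) : Set (V × V) :=
  {e | e ∈ G.E ∧ e.1 ∈ P.Om ∧ e.2 ∈ P.Psi}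

/-- The input part `Ψ` is contiguous: every non-input node of `Ψ` is reached
from some input by a path inside `Ψ`. -/
def InputContiguous (G : IODGraph V) (P : IOPartition G) : Prop :=
  ∀ n ∈ P.Psi \ G.I, ∃ i ∈ G.I, G.ReachWithin P.Psi i n

/-- The output part `Ω` is contiguous: every non-output node of `Ω` reaches
some output by a path inside `Ω`. -/
def OutputContiguous (G : IODGraph V) (P : IOPartition G) : Prop :=
  ∀ n ∈ P.Om \ G.O, ∃ o ∈ G.O, G.ReachWithin P.Om n o

/-- Crossover compatibility of two IOD graphs with chosen IO partitions. -/
structure CrossCompat (G G' : IODGraph V) (P : IOPartition G) (P' : IOPartition G') : Prop where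
  psi_om' : P.Psi ∩ P'.Om = ∅
  psi'_om : P'.Psi ∩ P.Om = ∅
  finF : (Fwd G P).Finite
  finF' : (Fwd G' P').Finite
  finB : (Bwd G P).Finite
  finB' : (Bwd G' P').Finite
  cardF : (Fwd G P).ncard = (Fwd G' P').ncard
  cardB : (Bwd G P).ncard = (Bwd G' P').ncard

/-- The crossover membrane induced by bijections `g : F(Ψ,Ω) ≃ F(Ψ',Ω')` and
`h : B(Ψ',Ω') ≃ B(Ψ,Ω)`: the edges `(source of f, destination of g f)` for
forward links `f`, and `(source of b', destination of h b')` for backward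
links `b'` of the output parent. -/
def membraneEdges (G G' : IODGraph V) (P : IOPartition G) (P' : IOPartition G')
    (g : Fwd G P ≃ Fwd G' P') (h : Bwd G' P' ≃ Bwd G P) : Set (V × V) :=
  (Set.range fun f : Fwd G P => ((f : V × V).1, (g f : V × V).2)) ∪
  (Set.range fun b' : Bwd G' P' => ((b' : V × V).1, (h b' : V × V).2))

/-- The edge set of the crossover child: edges of `G` within `Ψ`, edges of `G'`
within `Ω'`, and the crossover membrane. -/
def childEdges (G G' : IODGraph V) (P : IOPartition G) (P' : IOPartition G')
    (g : Fwd G P ≃ Fwd G' P') (h : Bwd G' P' ≃ Bwd G P) : Set (V × V) :=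
  {e | e ∈ G.E ∧ e.1 ∈ P.Psi ∧ e.2 ∈ P.Psi} ∪
  {e | e ∈ G'.E ∧ e.1 ∈ P'.Om ∧ e.2 ∈ P'.Om} ∪
  membraneEdges G G' P P' g h

/-- Reachability (directed paths) in the crossover child. -/
def childReach (G G' : IODGraph V) (P : IOPartition G) (P' : IOPartition G')
    (g : Fwd G P ≃ Fwd G' P') (h : Bwd G' P' ≃ Bwd G P) : V → V → Prop :=
  Relation.ReflTransGen (fun x y => (x, y) ∈ childEdges G G' P P' g h)

end IODGraph

open IODGraph

/-- any crossover child of crossover compatible IOD graphs is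
itself an IOD graph: its inputs `I` and outputs `O'` are disjoint subsets of
its node set `Ψ ∪ Ω'`, no edge of the child ends at a node of `I`, and no
edge of the child starts at a node of `O'`. -/
theorem crossover_child_is_IODGraph {V : Type} (G G' : IODGraph V)
    (P : IOPartition G) (P' : IOPartition G')
    (hc : CrossCompat G G' P P')
    (g : Fwd G P ≃ Fwd G' P') (h : Bwd G' P' ≃ Bwd G P) :
    Disjoint G.I G'.O ∧
    G.I ⊆ P.Psi ∪ P'.Om ∧
    G'.O ⊆ P.Psi ∪ P'.Om ∧
    (∀ e ∈ childEdges G G' P P' g h, e.1 ∈ P.Psi ∪ P'.Om ∧ e.2 ∈ P.Psi ∪ P'.Om) ∧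
    (∀ e ∈ childEdges G G' P P' g h, e.2 ∉ G.I) ∧
    (∀ e ∈ childEdges G G' P P' g h, e.1 ∉ G'.O) := by
  have hdisj : ∀ x, x ∈ P.Psi → x ∈ P'.Om → False := by
    intro x hx hx'
    have : x ∈ P.Psi ∩ P'.Om := ⟨hx, hx'⟩
    rw [hc.psi_om'] at this
    exact this
  have hmemb : ∀ e ∈ membraneEdges G G' P P' g h,
      (e.1 ∈ P.Psi ∪ P'.Om ∧ e.2 ∈ P.Psi ∪ P'.Om) ∧ e.2 ∉ G.I ∧ e.1 ∉ G'.O := by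
    rintro e (⟨f, rfl⟩ | ⟨b', rfl⟩)
    · refine ⟨⟨Or.inl f.2.2.1, Or.inr (g f).2.2.2⟩, ?_, ?_⟩
      · intro hI
        exact hdisj _ (P.I_sub hI) (g f).2.2.2
      · intro hO
        exact hdisj _ f.2.2.1 (P'.O_sub hO)
    · refine ⟨⟨Or.inr b'.2.2.1, Or.inl (h b').2.2.2⟩, ?_, ?_⟩
      · exact fun hI => G.no_into_I _ (h b').2.1 hI
      · exact fun hO => G'.no_outof_O _ b'.2.1 hO
  refine ⟨?_, fun x hx => Or.inl (P.I_sub hx), fun x hx => Or.inr (P'.O_sub hx), ?_, ?_, ?_⟩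
  · rw [Set.disjoint_left]
    intro x hI hO
    exact hdisj x (P.I_sub hI) (P'.O_sub hO)
  · rintro e ((⟨_, h1, h2⟩ | ⟨_, h1, h2⟩) | hm)
    · exact ⟨Or.inl h1, Or.inl h2⟩
    · exact ⟨Or.inr h1, Or.inr h2⟩
    · exact (hmemb e hm).1
  · rintro e ((⟨hE, _, _⟩ | ⟨_, _, h2⟩) | hm)
    · exact G.no_into_I e hE
    · exact fun hI => hdisj _ (P.I_sub hI) h2
    · exact (hmemb e hm).2.1
  · rintro e ((⟨_, h1, _⟩ | ⟨hE, _, _⟩) | hm)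
    · exact fun hO => hdisj _ h1 (P'.O_sub hO)
    · exact G'.no_outof_O e hE
    · exact (hmemb e hm).2.2
end

section
/- For every J ≥ 1 and K ≥ 1 there exist IOD graphs G and G', each with J inputs and K outputs and each fully informative, together with crossover compatible IO partitions (Ψ,Ω) of G and (Ψ',Ω') of G' and a crossover membrane, such that the resulting crossover child is non-informative (it contains no directed path from any input to any output). -/
open IODGraph


namespace CE

/-- Vertices are pairs (tag, index). Tags: 0 = inputs of G, 1 = {a,b},
2 = {c}, 3 = outputs of G, 4 = inputs of G', 5 = {a'}, 6 = {c',d'},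
7 = outputs of G'. -/
abbrev V := ℕ × ℕ

def GG (J K : ℕ) : IODGraph V where
  N := {p | (p.1 = 0 ∧ p.2 < J) ∨ (p.1 = 1 ∧ p.2 < 2) ∨ (p.1 = 2 ∧ p.2 = 0) ∨ (p.1 = 3 ∧ p.2 < K)}
  E := {e | (e.1.1 = 0 ∧ e.1.2 < J ∧ e.2.1 = 1 ∧ e.2.2 = 0)
       ∨ (e.1.1 = 1 ∧ e.1.2 < 2 ∧ e.2.1 = 2 ∧ e.2.2 = 0)
       ∨ (e.1.1 = 2 ∧ e.1.2 = 0 ∧ e.2.1 = 3 ∧ e.2.2 < K)}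
  I := {p | p.1 = 0 ∧ p.2 < J}
  O := {p | p.1 = 3 ∧ p.2 < K}
  I_sub := by intro p hp; simp only [Set.mem_setOf_eq] at *; omega
  O_sub := by intro p hp; simp only [Set.mem_setOf_eq] at *; omega
  disjIO := by
    rw [Set.disjoint_left]; intro p hp hq
    simp only [Set.mem_setOf_eq] at *; omega
  E_mem := by intro e he; simp only [Set.mem_setOf_eq] at *; omega
  no_into_I := by intro e he hi; simp only [Set.mem_setOf_eq] at *; omega
  no_outof_O := by intro e he hi; simp only [Set.mem_setOf_eq] at *; omega

def GG' (J K : ℕ) : IODGraph V where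
  N := {p | (p.1 = 4 ∧ p.2 < J) ∨ (p.1 = 5 ∧ p.2 = 0) ∨ (p.1 = 6 ∧ p.2 < 2) ∨ (p.1 = 7 ∧ p.2 < K)}
  E := {e | (e.1.1 = 4 ∧ e.1.2 < J ∧ e.2.1 = 5 ∧ e.2.2 = 0)
       ∨ (e.1.1 = 5 ∧ e.1.2 = 0 ∧ e.2.1 = 6 ∧ e.2.2 < 2)
       ∨ (e.1.1 = 6 ∧ e.1.2 = 1 ∧ e.2.1 = 7 ∧ e.2.2 < K)}
  I := {p | p.1 = 4 ∧ p.2 < J}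
  O := {p | p.1 = 7 ∧ p.2 < K}
  I_sub := by intro p hp; simp only [Set.mem_setOf_eq] at *; omega
  O_sub := by intro p hp; simp only [Set.mem_setOf_eq] at *; omega
  disjIO := by
    rw [Set.disjoint_left]; intro p hp hq
    simp only [Set.mem_setOf_eq] at *; omega
  E_mem := by intro e he; simp only [Set.mem_setOf_eq] at *; omega
  no_into_I := by intro e he hi; simp only [Set.mem_setOf_eq] at *; omega
  no_outof_O := by intro e he hi; simp only [Set.mem_setOf_eq] at *; omega

def PP (J K : ℕ) : IOPartition (GG J K) where
  Psi := {p | (p.1 = 0 ∧ p.2 < J) ∨ (p.1 = 1 ∧ p.2 < 2)}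
  Om := {p | (p.1 = 2 ∧ p.2 = 0) ∨ (p.1 = 3 ∧ p.2 < K)}
  union_eq := by ext p; simp only [Set.mem_union, Set.mem_setOf_eq, GG]; omega
  disj := by
    rw [Set.disjoint_left]; intro p hp hq
    simp only [Set.mem_setOf_eq] at *; omega
  I_sub := by intro p hp; simp only [GG, Set.mem_setOf_eq] at *; omega
  O_sub := by intro p hp; simp only [GG, Set.mem_setOf_eq] at *; omega

def PP' (J K : ℕ) : IOPartition (GG' J K) where
  Psi := {p | (p.1 = 4 ∧ p.2 < J) ∨ (p.1 = 5 ∧ p.2 = 0)}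
  Om := {p | (p.1 = 6 ∧ p.2 < 2) ∨ (p.1 = 7 ∧ p.2 < K)}
  union_eq := by ext p; simp only [Set.mem_union, Set.mem_setOf_eq, GG']; omega
  disj := by
    rw [Set.disjoint_left]; intro p hp hq
    simp only [Set.mem_setOf_eq] at *; omega
  I_sub := by intro p hp; simp only [GG', Set.mem_setOf_eq] at *; omega
  O_sub := by intro p hp; simp only [GG', Set.mem_setOf_eq] at *; omega

lemma fwd_eq (J K : ℕ) :
    Fwd (GG J K) (PP J K) = {(((1:ℕ),(0:ℕ)),((2:ℕ),(0:ℕ))), (((1:ℕ),(1:ℕ)),((2:ℕ),(0:ℕ)))} := by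
  ext ⟨⟨x1,x2⟩,⟨y1,y2⟩⟩
  simp only [Fwd, GG, PP, Set.mem_setOf_eq, Set.mem_insert_iff, Set.mem_singleton_iff,
    Prod.mk.injEq]
  omega

lemma fwd'_eq (J K : ℕ) :
    Fwd (GG' J K) (PP' J K) = {(((5:ℕ),(0:ℕ)),((6:ℕ),(0:ℕ))), (((5:ℕ),(0:ℕ)),((6:ℕ),(1:ℕ)))} := by
  ext ⟨⟨x1,x2⟩,⟨y1,y2⟩⟩
  simp only [Fwd, GG', PP', Set.mem_setOf_eq, Set.mem_insert_iff, Set.mem_singleton_iff,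
    Prod.mk.injEq]
  omega

lemma bwd_eq (J K : ℕ) : Bwd (GG J K) (PP J K) = ∅ := by
  ext ⟨⟨x1,x2⟩,⟨y1,y2⟩⟩
  simp only [Bwd, GG, PP, Set.mem_setOf_eq, Set.mem_empty_iff_false, iff_false, not_and]
  omega

lemma bwd'_eq (J K : ℕ) : Bwd (GG' J K) (PP' J K) = ∅ := by
  ext ⟨⟨x1,x2⟩,⟨y1,y2⟩⟩
  simp only [Bwd, GG', PP', Set.mem_setOf_eq, Set.mem_empty_iff_false, iff_false, not_and]
  omega

lemma p1_mem (J K : ℕ) : (((1:ℕ),(0:ℕ)),((2:ℕ),(0:ℕ))) ∈ Fwd (GG J K) (PP J K) := by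
  rw [fwd_eq]; left; rfl
lemma p2_mem (J K : ℕ) : (((1:ℕ),(1:ℕ)),((2:ℕ),(0:ℕ))) ∈ Fwd (GG J K) (PP J K) := by
  rw [fwd_eq]; right; rfl
lemma q1_mem (J K : ℕ) : (((5:ℕ),(0:ℕ)),((6:ℕ),(0:ℕ))) ∈ Fwd (GG' J K) (PP' J K) := by
  rw [fwd'_eq]; left; rfl
lemma q2_mem (J K : ℕ) : (((5:ℕ),(0:ℕ)),((6:ℕ),(1:ℕ))) ∈ Fwd (GG' J K) (PP' J K) := by
  rw [fwd'_eq]; right; rfl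

def gE (J K : ℕ) : Fwd (GG J K) (PP J K) ≃ Fwd (GG' J K) (PP' J K) where
  toFun x := if x.val = (((1:ℕ),(0:ℕ)),((2:ℕ),(0:ℕ)))
    then ⟨(((5:ℕ),(0:ℕ)),((6:ℕ),(0:ℕ))), q1_mem J K⟩
    else ⟨(((5:ℕ),(0:ℕ)),((6:ℕ),(1:ℕ))), q2_mem J K⟩
  invFun y := if y.val = (((5:ℕ),(0:ℕ)),((6:ℕ),(0:ℕ)))
    then ⟨(((1:ℕ),(0:ℕ)),((2:ℕ),(0:ℕ))), p1_mem J K⟩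
    else ⟨(((1:ℕ),(1:ℕ)),((2:ℕ),(0:ℕ))), p2_mem J K⟩
  left_inv := by
    rintro ⟨xv, hxv⟩
    have hx := hxv
    rw [fwd_eq] at hx
    simp only [Set.mem_insert_iff, Set.mem_singleton_iff] at hx
    apply Subtype.ext
    rcases hx with h | h
    · simp [-Prod.mk_one_one, h]
    · simp [-Prod.mk_one_one, h]
  right_inv := by
    rintro ⟨yv, hyv⟩
    have hy := hyv
    rw [fwd'_eq] at hy
    simp only [Set.mem_insert_iff, Set.mem_singleton_iff] at hy
    apply Subtype.ext
    rcases hy with h | h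
    · simp [-Prod.mk_one_one, h]
    · simp [-Prod.mk_one_one, h]

noncomputable def hE (J K : ℕ) : Bwd (GG' J K) (PP' J K) ≃ Bwd (GG J K) (PP J K) :=
  haveI h1 : IsEmpty (Bwd (GG' J K) (PP' J K)) := by
    rw [Set.isEmpty_coe_sort, bwd'_eq]
  haveI h2 : IsEmpty (Bwd (GG J K) (PP J K)) := by
    rw [Set.isEmpty_coe_sort, bwd_eq]
  Equiv.equivOfIsEmpty _ _

lemma tag_ncard (t J : ℕ) : ({p : V | p.1 = t ∧ p.2 < J}).ncard = J := by
  have : {p : V | p.1 = t ∧ p.2 < J} = ↑((Finset.range J).image fun j => (t, j)) := by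
    ext ⟨a, b⟩
    simp only [Set.mem_setOf_eq, Finset.coe_image, Set.mem_image, Finset.mem_coe,
      Finset.mem_range, Prod.mk.injEq]
    constructor
    · rintro ⟨rfl, hb⟩; exact ⟨b, hb, rfl, rfl⟩
    · rintro ⟨j, hj, rfl, rfl⟩; exact ⟨rfl, hj⟩
  rw [this, Set.ncard_coe_finset, Finset.card_image_of_injective, Finset.card_range]
  intro a b hab
  exact (Prod.mk.injEq _ _ _ _).mp hab |>.2

lemma tag_finite (t J : ℕ) : ({p : V | p.1 = t ∧ p.2 < J}).Finite := by
  apply Set.Finite.subset (Set.finite_Iic (t, J))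
  rintro ⟨a, b⟩ ⟨rfl, hb⟩
  exact ⟨le_refl _, le_of_lt hb⟩

/-- The invariant region: nodes of the child reachable from inputs of `G`. -/
def R (J : ℕ) : Set V := {p | (p.1 = 0 ∧ p.2 < J) ∨ (p.1 = 1 ∧ p.2 = 0) ∨ (p.1 = 6 ∧ p.2 = 0)}

lemma R_closed (J K : ℕ) : ∀ x y : V,
    (x, y) ∈ childEdges (GG J K) (GG' J K) (PP J K) (PP' J K) (gE J K) (hE J K) →
    x ∈ R J → y ∈ R J := by
  intro x y h hx
  rcases h with (⟨he, hx1, hy1⟩ | ⟨he, hx1, hy1⟩) | hm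
  · simp only [GG, PP, Set.mem_setOf_eq, R] at *
    omega
  · simp only [GG', PP', Set.mem_setOf_eq, R] at *
    omega
  · rcases hm with ⟨f, hf⟩ | ⟨b, hb⟩
    · obtain ⟨fv, hfv⟩ := f
      have hfv' := hfv
      rw [fwd_eq] at hfv'
      simp only [Set.mem_insert_iff, Set.mem_singleton_iff] at hfv'
      rcases hfv' with h | h
      · subst h
        simp only [gE, Equiv.coe_fn_mk, if_pos rfl] at hf
        rw [Prod.ext_iff] at hf
        obtain ⟨h1, h2⟩ := hf
        subst h1; subst h2
        exact Or.inr (Or.inr ⟨rfl, rfl⟩)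
      · subst h
        simp only [gE, Equiv.coe_fn_mk] at hf
        rw [if_neg (by decide)] at hf
        rw [Prod.ext_iff] at hf
        obtain ⟨h1, h2⟩ := hf
        subst h1; subst h2
        exfalso
        simp [-Prod.mk_one_one, R] at hx
    · exact (Set.eq_empty_iff_forall_notMem.mp (bwd'_eq J K) _ b.2).elim

lemma R_reach (J K : ℕ) {x y : V}
    (h : childReach (GG J K) (GG' J K) (PP J K) (PP' J K) (gE J K) (hE J K) x y)
    (hx : x ∈ R J) : y ∈ R J := by
  induction h with
  | refl => exact hx
  | tail h2 e ih => exact R_closed J K _ _ e ih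

lemma child_noninf (J K : ℕ) : ∀ i ∈ (GG J K).I, ∀ o' ∈ (GG' J K).O,
    ¬ childReach (GG J K) (GG' J K) (PP J K) (PP' J K) (gE J K) (hE J K) i o' := by
  intro i hi o' ho' hreach
  have hi' : i ∈ R J := by
    simp only [GG, Set.mem_setOf_eq] at hi
    exact Or.inl hi
  have key : o' ∈ R J := R_reach J K hreach hi'
  simp only [GG', Set.mem_setOf_eq] at ho'
  simp only [R, Set.mem_setOf_eq] at key
  omega

end CE

/-- for every `J ≥ 1` and `K ≥ 1` there are fully informative
IOD graphs `G, G'`, each with `J` inputs and `K` outputs, with crossover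
compatible IO partitions and a crossover membrane whose crossover child is
non-informative. -/
theorem fully_informative_parents_can_yield_noninformative_child :
    ∀ J K : ℕ, 1 ≤ J → 1 ≤ K →
    ∃ (V : Type) (G G' : IODGraph V) (P : IOPartition G) (P' : IOPartition G')
      (g : Fwd G P ≃ Fwd G' P') (h : Bwd G' P' ≃ Bwd G P),
      G.I.Finite ∧ G.O.Finite ∧ G'.I.Finite ∧ G'.O.Finite ∧
      G.I.ncard = J ∧ G.O.ncard = K ∧ G'.I.ncard = J ∧ G'.O.ncard = K ∧
      FullyInformative G ∧ FullyInformative G' ∧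
      CrossCompat G G' P P' ∧
      (∀ i ∈ G.I, ∀ o' ∈ G'.O, ¬ childReach G G' P P' g h i o') := by
  intro J K hJ hK
  refine ⟨CE.V, CE.GG J K, CE.GG' J K, CE.PP J K, CE.PP' J K, CE.gE J K, CE.hE J K,
    CE.tag_finite 0 J, CE.tag_finite 3 K, CE.tag_finite 4 J, CE.tag_finite 7 K,
    CE.tag_ncard 0 J, CE.tag_ncard 3 K, CE.tag_ncard 4 J, CE.tag_ncard 7 K,
    ?_, ?_, ?_, CE.child_noninf J K⟩
  · intro i hi o ho
    simp only [CE.GG, Set.mem_setOf_eq] at hi ho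
    have e1 : (i, ((1:ℕ),(0:ℕ))) ∈ (CE.GG J K).E :=
      Or.inl ⟨hi.1, hi.2, rfl, rfl⟩
    have e2 : ((((1:ℕ),(0:ℕ)) : CE.V), (((2:ℕ),(0:ℕ)) : CE.V)) ∈ (CE.GG J K).E :=
      Or.inr (Or.inl ⟨rfl, by decide, rfl, rfl⟩)
    have e3 : ((((2:ℕ),(0:ℕ)) : CE.V), o) ∈ (CE.GG J K).E :=
      Or.inr (Or.inr ⟨rfl, rfl, ho.1, ho.2⟩)
    exact Relation.ReflTransGen.head e1 (Relation.ReflTransGen.head e2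
      (Relation.ReflTransGen.single e3))
  · intro i hi o ho
    simp only [CE.GG', Set.mem_setOf_eq] at hi ho
    have e1 : (i, ((5:ℕ),(0:ℕ))) ∈ (CE.GG' J K).E :=
      Or.inl ⟨hi.1, hi.2, rfl, rfl⟩
    have e2 : ((((5:ℕ),(0:ℕ)) : CE.V), (((6:ℕ),(1:ℕ)) : CE.V)) ∈ (CE.GG' J K).E :=
      Or.inr (Or.inl ⟨rfl, rfl, rfl, by decide⟩)
    have e3 : ((((6:ℕ),(1:ℕ)) : CE.V), o) ∈ (CE.GG' J K).E :=
      Or.inr (Or.inr ⟨rfl, rfl, ho.1, ho.2⟩)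
    exact Relation.ReflTransGen.head e1 (Relation.ReflTransGen.head e2
      (Relation.ReflTransGen.single e3))
  · refine ⟨?_, ?_, ?_, ?_, ?_, ?_, ?_, ?_⟩
    · ext p; simp only [CE.PP, CE.PP', Set.mem_inter_iff, Set.mem_setOf_eq,
        Set.mem_empty_iff_false, iff_false, not_and]; intro h; omega
    · ext p; simp only [CE.PP, CE.PP', Set.mem_inter_iff, Set.mem_setOf_eq,
        Set.mem_empty_iff_false, iff_false, not_and]; intro h; omega
    · rw [CE.fwd_eq]; exact (Set.finite_singleton _).insert _
    · rw [CE.fwd'_eq]; exact (Set.finite_singleton _).insert _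
    · rw [CE.bwd_eq]; exact Set.finite_empty
    · rw [CE.bwd'_eq]; exact Set.finite_empty
    · rw [CE.fwd_eq, CE.fwd'_eq, Set.ncard_pair (by decide), Set.ncard_pair (by decide)]
    · rw [CE.bwd_eq, CE.bwd'_eq]
end

section
/- Suppose IOD graph G has an input-contiguous IO partition (Ψ,Ω), IOD graph G' has an output-contiguous IO partition (Ψ',Ω'), these partitions are crossover compatible, and both G and G' satisfy the no dangling nodes condition. Then any crossover child produced from these partitions also satisfies the no dangling nodes condition: every intermediate node of the child lies on a directed path in the child from some input in I to some output in O'. -/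
open IODGraph

/-- if `G` has an input-contiguous IO partition, `G'` has an
output-contiguous IO partition, the partitions are crossover compatible, and
both parents satisfy the no dangling nodes condition, then every intermediate
node of any crossover child lies on a directed path in the child from some
input in `I` to some output in `O'`. -/
theorem crossover_child_no_dangling {V : Type} (G G' : IODGraph V)
    (P : IOPartition G) (P' : IOPartition G')
    (hIC : InputContiguous G P) (hOC : OutputContiguous G' P')
    (hc : CrossCompat G G' P P')
    (hdG : NoDangling G) (hdG' : NoDangling G')
    (g : Fwd G P ≃ Fwd G' P') (h : Bwd G' P' ≃ Bwd G P) :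
    ∀ n ∈ (P.Psi ∪ P'.Om) \ (G.I ∪ G'.O),
      ∃ i ∈ G.I, ∃ o' ∈ G'.O,
        childReach G G' P P' g h i n ∧ childReach G G' P P' g h n o' := by
  -- within-Ψ reach gives child reach
  have withinPsi : ∀ {a b : V}, G.ReachWithin P.Psi a b →
      childReach G G' P P' g h a b := by
    intro a b hab
    refine Relation.ReflTransGen.mono ?_ a b hab
    rintro x y ⟨he, hx, hy⟩
    exact Or.inl (Or.inl ⟨he, hx, hy⟩)
  have withinOm' : ∀ {a b : V}, G'.ReachWithin P'.Om a b →
      childReach G G' P P' g h a b := by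
    intro a b hab
    refine Relation.ReflTransGen.mono ?_ a b hab
    rintro x y ⟨he, hx, hy⟩
    exact Or.inl (Or.inr ⟨he, hx, hy⟩)
  -- membrane edges are child edges
  have memF : ∀ f : Fwd G P,
      ((f : V × V).1, ((g f : V × V)).2) ∈ childEdges G G' P P' g h :=
    fun f => Or.inr (Or.inl ⟨f, rfl⟩)
  -- L1: every node of Ψ is child-reachable from an input of G
  have L1 : ∀ m ∈ P.Psi, ∃ i ∈ G.I, childReach G G' P P' g h i m := by
    intro m hm
    by_cases hmI : m ∈ G.I
    · exact ⟨m, hmI, Relation.ReflTransGen.refl⟩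
    · obtain ⟨i, hi, hr⟩ := hIC m ⟨hm, hmI⟩
      exact ⟨i, hi, withinPsi hr⟩
  -- L2: every node of Ω' child-reaches an output of G'
  have L2 : ∀ m ∈ P'.Om, ∃ o' ∈ G'.O, childReach G G' P P' g h m o' := by
    intro m hm
    by_cases hmO : m ∈ G'.O
    · exact ⟨m, hmO, Relation.ReflTransGen.refl⟩
    · obtain ⟨o, ho, hr⟩ := hOC m ⟨hm, hmO⟩
      exact ⟨o, ho, withinOm' hr⟩
  -- destination of any forward link of G' is child-reachable from an input of G
  have bridgeF : ∀ e ∈ Fwd G' P', ∃ i ∈ G.I, childReach G G' P P' g h i e.2 := by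
    intro e he
    obtain ⟨f, hf⟩ : ∃ f, g f = ⟨e, he⟩ := ⟨g.symm ⟨e, he⟩, g.apply_symm_apply _⟩
    obtain ⟨i, hi, hr⟩ := L1 (f : V × V).1 f.2.2.1
    have hm := memF f
    rw [hf] at hm
    exact ⟨i, hi, hr.tail hm⟩
  -- source of any forward link of G child-reaches an output of G'
  have bridgeF2 : ∀ e ∈ Fwd G P, ∃ o' ∈ G'.O, childReach G G' P P' g h e.1 o' := by
    intro e he
    obtain ⟨o', ho', hr⟩ := L2 ((g ⟨e, he⟩ : V × V)).2 (g ⟨e, he⟩).2.2.2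
    exact ⟨o', ho', Relation.ReflTransGen.head (memF ⟨e, he⟩) hr⟩
  -- any node of Ω' reachable in G' from an input of G' is child-reachable from I
  have L3aux : ∀ {a m : V}, G'.Reach a m → a ∈ G'.I → m ∈ P'.Om →
      ∃ i ∈ G.I, childReach G G' P P' g h i m := by
    intro a m hr
    induction hr with
    | refl =>
        intro ha hm
        exact (Set.disjoint_left.1 P'.disj (P'.I_sub ha) hm).elim
    | @tail x y hax hxy ih =>
        intro ha hy
        have hxN : x ∈ G'.N := (G'.E_mem _ hxy).1
        rw [← P'.union_eq] at hxN
        rcases hxN with hxP | hxO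
        · exact bridgeF (x, y) ⟨hxy, hxP, hy⟩
        · obtain ⟨i, hi, hr'⟩ := ih ha hxO
          exact ⟨i, hi, hr'.tail (Or.inl (Or.inr ⟨hxy, hxO, hy⟩))⟩
  -- any node of Ψ reaching an output of G child-reaches an output of G'
  have L4aux : ∀ {m b : V}, G.Reach m b → b ∈ G.O → m ∈ P.Psi →
      ∃ o' ∈ G'.O, childReach G G' P P' g h m o' := by
    intro m b hr
    induction hr using Relation.ReflTransGen.head_induction_on with
    | refl =>
        intro hb hm
        exact (Set.disjoint_left.1 P.disj hm (P.O_sub hb)).elim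
    | @head x y hxy hyb ih =>
        intro hb hx
        have hyN : y ∈ G.N := (G.E_mem _ hxy).2
        rw [← P.union_eq] at hyN
        rcases hyN with hyP | hyO
        · obtain ⟨o', ho', hr'⟩ := ih hb hyP
          exact ⟨o', ho', Relation.ReflTransGen.head (Or.inl (Or.inl ⟨hxy, hx, hyP⟩)) hr'⟩
        · exact bridgeF2 (x, y) ⟨hxy, hx, hyO⟩
  intro n hn
  obtain ⟨hnU, hnNI⟩ := hn
  rcases hnU with hnP | hnO
  · -- n ∈ Ψ
    obtain ⟨i, hi, hri⟩ := L1 n hnP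
    have hnI : n ∉ G.I := fun hh => hnNI (Or.inl hh)
    have hnGO : n ∉ G.O := fun hh => Set.disjoint_left.1 P.disj hnP (P.O_sub hh)
    have hnN : n ∈ G.N := by rw [← P.union_eq]; exact Or.inl hnP
    obtain ⟨i0, _, o0, ho0, _, hro⟩ := hdG n ⟨hnN, fun hh => hh.elim hnI hnGO⟩
    obtain ⟨o', ho', hr'⟩ := L4aux hro ho0 hnP
    exact ⟨i, hi, o', ho', hri, hr'⟩
  · -- n ∈ Ω'
    have hnO' : n ∉ G'.O := fun hh => hnNI (Or.inr hh)
    obtain ⟨o', ho', hro⟩ := L2 n hnO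
    have hnI' : n ∉ G'.I := fun hh => Set.disjoint_left.1 P'.disj (P'.I_sub hh) hnO
    have hnN : n ∈ G'.N := by rw [← P'.union_eq]; exact Or.inr hnO
    obtain ⟨i', hi', o0, _, hri, _⟩ := hdG' n ⟨hnN, fun hh => hh.elim hnI' hnO'⟩
    obtain ⟨i, hi, hr⟩ := L3aux hri hi' hnO
    exact ⟨i, hi, o', ho', hr, hro⟩
end

section
/- If an IOD graph G satisfies the no dangling nodes condition and has at least one intermediate node, then for every IO partition (Ψ,Ω) of G: (i) every forward edge f ∈ F(Ψ,Ω) lies on some directed path from an input to an output, and (ii) the set of forward edges F(Ψ,Ω) is non-empty. -/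
open IODGraph

/-- if `G` satisfies the no dangling nodes condition and has an
intermediate node, then for every IO partition, every forward edge lies on a
directed path from an input to an output, and the set of forward edges is
non-empty. -/
theorem forward_edges_on_paths_and_nonempty {V : Type} (G : IODGraph V)
    (hd : NoDangling G) (hint : (G.N \ (G.I ∪ G.O)).Nonempty)
    (P : IOPartition G) :
    (∀ f ∈ Fwd G P, ∃ i ∈ G.I, ∃ o ∈ G.O, G.Reach i f.1 ∧ G.Reach f.2 o) ∧
    (Fwd G P).Nonempty := by
  -- helper: a node in N is either reached from an input, or is an input
  have hIn : ∀ a ∈ G.N, a ∉ G.O → ∃ i ∈ G.I, G.Reach i a := by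
    intro a haN haO
    by_cases haI : a ∈ G.I
    · exact ⟨a, haI, Relation.ReflTransGen.refl⟩
    · obtain ⟨i, hi, o, ho, h1, _⟩ := hd a ⟨haN, by simp [haI, haO]⟩
      exact ⟨i, hi, h1⟩
  have hOut : ∀ b ∈ G.N, b ∉ G.I → ∃ o ∈ G.O, G.Reach b o := by
    intro b hbN hbI
    by_cases hbO : b ∈ G.O
    · exact ⟨b, hbO, Relation.ReflTransGen.refl⟩
    · obtain ⟨i, hi, o, ho, _, h2⟩ := hd b ⟨hbN, by simp [hbI, hbO]⟩
      exact ⟨o, ho, h2⟩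
  constructor
  · rintro ⟨a, b⟩ ⟨hE, _, _⟩
    obtain ⟨haN, hbN⟩ := G.E_mem _ hE
    obtain ⟨i, hi, hia⟩ := hIn a haN (G.no_outof_O _ hE)
    obtain ⟨o, ho, hbo⟩ := hOut b hbN (G.no_into_I _ hE)
    exact ⟨i, hi, o, ho, hia, hbo⟩
  · -- crossing lemma
    have cross : ∀ x y, G.Reach x y → x ∈ P.Psi → y ∈ P.Om → (Fwd G P).Nonempty := by
      intro x y h
      induction h with
      | refl =>
        intro hx hy
        exact absurd (P.disj.ne_of_mem hx hy) (fun h => h rfl)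
      | tail hr he ih =>
        rename_i z w
        intro hx hw
        have hzN : z ∈ G.N := (G.E_mem _ he).1
        rcases (P.union_eq ▸ hzN : z ∈ P.Psi ∪ P.Om) with hz | hz
        · exact ⟨(z, w), he, hz, hw⟩
        · exact ih hx hz
    obtain ⟨n, hnN, hnIO⟩ := hint
    obtain ⟨i, hi, o, ho, h1, h2⟩ := hd n ⟨hnN, hnIO⟩
    exact cross i o (h1.trans h2) (P.I_sub hi) (P.O_sub ho)
end

section
/- Let IOD graphs G and G' both be partially informative and both satisfy the no dangling nodes condition. Then any crossover child produced from an input-contiguous IO partition (Ψ,Ω) of input parent G and an output-contiguous IO partition (Ψ',Ω') of output parent G' (the partitions being crossover compatible) is partially informative: the child contains a directed path from some input in I to some output in O'. -/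
open IODGraph

/-- partially informative parents satisfying the no dangling
nodes condition, crossed over along an input-contiguous partition of the input
parent and an output-contiguous partition of the output parent, yield a
partially informative child. -/
theorem crossover_child_partially_informative {V : Type} (G G' : IODGraph V)
    (hG : PartiallyInformative G) (hG' : PartiallyInformative G')
    (hdG : NoDangling G) (hdG' : NoDangling G')
    (P : IOPartition G) (P' : IOPartition G')
    (hIC : InputContiguous G P) (hOC : OutputContiguous G' P')
    (hc : CrossCompat G G' P P')
    (g : Fwd G P ≃ Fwd G' P') (h : Bwd G' P' ≃ Bwd G P) :
    ∃ i ∈ G.I, ∃ o' ∈ G'.O, childReach G G' P P' g h i o' := by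
  classical
  -- Step 1: Fwd G P is nonempty.
  have exists_fwd : ∀ {a b : V}, G.Reach a b → a ∈ P.Psi → b ∈ P.Om →
      ∃ f, f ∈ Fwd G P := by
    intro a b hr
    induction hr using Relation.ReflTransGen.head_induction_on with
    | refl =>
      intro ha hb
      exact absurd hb (Set.disjoint_left.mp P.disj ha)
    | head hedge _ ih =>
      rename_i x c _
      intro hx hb
      have hcN : c ∈ G.N := (G.E_mem _ hedge).2
      rw [← P.union_eq] at hcN
      rcases hcN with hc | hc
      · exact ih hc hb
      · exact ⟨(x, c), hedge, hx, hc⟩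
  obtain ⟨i0, hi0, o0, ho0, hro⟩ := hG
  obtain ⟨fe, hfe⟩ := exists_fwd hro (P.I_sub hi0) (P.O_sub ho0)
  set f : Fwd G P := ⟨fe, hfe⟩ with hfdef
  have hs : (f : V × V).1 ∈ P.Psi := hfe.2.1
  -- Step 2: path from an input to the source of f within Ψ, lifted to the child.
  have lift1 : ∀ {a b : V}, G.ReachWithin P.Psi a b → childReach G G' P P' g h a b := by
    intro a b hr
    exact Relation.ReflTransGen.mono (r := fun x y => (x, y) ∈ G.E ∧ x ∈ P.Psi ∧ y ∈ P.Psi)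
      (p := fun x y => (x, y) ∈ childEdges G G' P P' g h)
      (fun x y hxy => Or.inl (Or.inl ⟨hxy.1, hxy.2.1, hxy.2.2⟩)) _ _ hr
  have lift2 : ∀ {a b : V}, G'.ReachWithin P'.Om a b → childReach G G' P P' g h a b := by
    intro a b hr
    exact Relation.ReflTransGen.mono (r := fun x y => (x, y) ∈ G'.E ∧ x ∈ P'.Om ∧ y ∈ P'.Om)
      (p := fun x y => (x, y) ∈ childEdges G G' P P' g h)
      (fun x y hxy => Or.inl (Or.inr ⟨hxy.1, hxy.2.1, hxy.2.2⟩)) _ _ hr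
  obtain ⟨i, hi, hreach_i_s⟩ :
      ∃ i ∈ G.I, childReach G G' P P' g h i (f : V × V).1 := by
    by_cases hsI : (f : V × V).1 ∈ G.I
    · exact ⟨_, hsI, Relation.ReflTransGen.refl⟩
    · obtain ⟨i, hi, hri⟩ := hIC _ ⟨hs, hsI⟩
      exact ⟨i, hi, lift1 hri⟩
  -- Step 3: membrane edge from source of f to destination of g f.
  have hmem : ((f : V × V).1, (g f : V × V).2) ∈ childEdges G G' P P' g h :=
    Or.inr (Or.inl ⟨f, rfl⟩)
  have hstep : childReach G G' P P' g h (f : V × V).1 (g f : V × V).2 :=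
    Relation.ReflTransGen.single hmem
  have hreach_i_t : childReach G G' P P' g h i (g f : V × V).2 :=
    hreach_i_s.trans hstep
  -- Step 4: from the destination of g f to an output of G'.
  have hgfprop : (g f : V × V) ∈ Fwd G' P' := (g f).2
  have htOm : (g f : V × V).2 ∈ P'.Om := hgfprop.2.2
  by_cases htO : (g f : V × V).2 ∈ G'.O
  · exact ⟨i, hi, _, htO, hreach_i_t⟩
  · obtain ⟨o', ho', hro'⟩ := hOC _ ⟨htOm, htO⟩
    exact ⟨i, hi, o', ho', hreach_i_t.trans (lift2 hro')⟩
end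

section
/- Suppose input parent IOD graph G is very informative, output parent IOD graph G' is partially informative, and both satisfy the no dangling nodes condition. Then any crossover child produced from an input-contiguous IO partition (Ψ,Ω) of G and an output-contiguous IO partition (Ψ',Ω') of G' (the partitions being crossover compatible) is very informative: for every input i ∈ I there is a directed path in the child from i to some output in O'. -/
open IODGraph

private lemma exists_fwd_aux {V : Type} (G : IODGraph V) (P : IOPartition G)
    {a b : V} (hr : G.Reach a b) (ha : a ∈ P.Psi) (hb : b ∈ P.Om) :
    ∃ e ∈ Fwd G P, G.ReachWithin P.Psi a e.1 := by
  revert ha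
  induction hr using Relation.ReflTransGen.head_induction_on with
  | refl => intro ha; exact (P.disj.ne_of_mem ha hb rfl).elim
  | head hxy _ ih =>
    intro ha
    rename_i x y _
    by_cases hy : y ∈ P.Om
    · exact ⟨(x, y), ⟨hxy, ha, hy⟩, Relation.ReflTransGen.refl⟩
    · have hyN : y ∈ G.N := (G.E_mem _ hxy).2
      have hyPsi : y ∈ P.Psi := by
        have h2 := P.union_eq ▸ hyN
        rcases h2 with h1 | h2
        · exact h1
        · exact absurd h2 hy
      obtain ⟨e, he, hre⟩ := ih hyPsi
      exact ⟨e, he, Relation.ReflTransGen.head ⟨hxy, ha, hyPsi⟩ hre⟩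

/-- a very informative input parent and a partially informative
output parent, both satisfying the no dangling nodes condition, crossed over
along an input-contiguous partition of the input parent and an
output-contiguous partition of the output parent, yield a very informative
child. -/
theorem crossover_child_very_informative {V : Type} (G G' : IODGraph V)
    (hG : VeryInformative G) (hG' : PartiallyInformative G')
    (hdG : NoDangling G) (hdG' : NoDangling G')
    (P : IOPartition G) (P' : IOPartition G')
    (hIC : InputContiguous G P) (hOC : OutputContiguous G' P')
    (hc : CrossCompat G G' P P')
    (g : Fwd G P ≃ Fwd G' P') (h : Bwd G' P' ≃ Bwd G P) :
    ∀ i ∈ G.I, ∃ o' ∈ G'.O, childReach G G' P P' g h i o' := by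
  intro i hi
  obtain ⟨o, ho, hro⟩ := hG i hi
  obtain ⟨e, he, hre⟩ := exists_fwd_aux G P hro (P.I_sub hi) (P.O_sub ho)
  have lift1 : childReach G G' P P' g h i e.1 := by
    refine Relation.ReflTransGen.mono ?_ _ _ hre
    intro x y hxy
    exact Or.inl (Or.inl hxy)
  set f' : Fwd G' P' := g ⟨e, he⟩ with hf'
  have hmem : (e.1, (f' : V × V).2) ∈ childEdges G G' P P' g h :=
    Or.inr (Or.inl ⟨⟨e, he⟩, rfl⟩)
  have lift2 : childReach G G' P P' g h i (f' : V × V).2 :=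
    Relation.ReflTransGen.tail lift1 hmem
  have hfOm : (f' : V × V).2 ∈ P'.Om := f'.2.2.2
  by_cases ho' : (f' : V × V).2 ∈ G'.O
  · exact ⟨_, ho', lift2⟩
  · obtain ⟨o', ho', hro'⟩ := hOC _ ⟨hfOm, ho'⟩
    have lift3 : childReach G G' P P' g h (f' : V × V).2 o' := by
      refine Relation.ReflTransGen.mono ?_ _ _ hro'
      intro x y hxy
      exact Or.inl (Or.inr hxy)
    exact ⟨o', ho', lift2.trans lift3⟩
end

section
/- There exist IOD graphs G and G', both fully informative and both satisfying the no dangling nodes condition, together with a contiguous IO partition (Ψ,Ω) of G and a contiguous IO partition (Ψ',Ω') of G' that are crossover compatible, and a crossover membrane, such that the resulting crossover child is not fully informative (some input i ∈ I and some output o' ∈ O' have no directed path from i to o' in the child). -/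
open IODGraph

/-! ### Concrete counterexample construction -/

/-- Parent graph `G`: inputs `{0,1}`, outputs `{2,3}`, all four input→output edges. -/
def exG : IODGraph ℕ where
  N := {0, 1, 2, 3}
  E := {(0, 2), (0, 3), (1, 2), (1, 3)}
  I := {0, 1}
  O := {2, 3}
  I_sub := by intro x hx; simp only [Set.mem_insert_iff, Set.mem_singleton_iff] at hx ⊢; tauto
  O_sub := by intro x hx; simp only [Set.mem_insert_iff, Set.mem_singleton_iff] at hx ⊢; tauto
  disjIO := by
    rw [Set.disjoint_left]
    intro x hx hx'
    simp only [Set.mem_insert_iff, Set.mem_singleton_iff] at hx hx'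
    omega
  E_mem := by
    intro e he
    simp only [Set.mem_insert_iff, Set.mem_singleton_iff] at he
    rcases he with rfl | rfl | rfl | rfl <;> simp
  no_into_I := by
    intro e he
    simp only [Set.mem_insert_iff, Set.mem_singleton_iff] at he
    rcases he with rfl | rfl | rfl | rfl <;> simp
  no_outof_O := by
    intro e he
    simp only [Set.mem_insert_iff, Set.mem_singleton_iff] at he
    rcases he with rfl | rfl | rfl | rfl <;> simp

/-- Parent graph `G'`: inputs `{4,5}`, outputs `{6,7}`, all four input→output edges. -/
def exG' : IODGraph ℕ where
  N := {4, 5, 6, 7}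
  E := {(4, 6), (4, 7), (5, 6), (5, 7)}
  I := {4, 5}
  O := {6, 7}
  I_sub := by intro x hx; simp only [Set.mem_insert_iff, Set.mem_singleton_iff] at hx ⊢; tauto
  O_sub := by intro x hx; simp only [Set.mem_insert_iff, Set.mem_singleton_iff] at hx ⊢; tauto
  disjIO := by
    rw [Set.disjoint_left]
    intro x hx hx'
    simp only [Set.mem_insert_iff, Set.mem_singleton_iff] at hx hx'
    omega
  E_mem := by
    intro e he
    simp only [Set.mem_insert_iff, Set.mem_singleton_iff] at he
    rcases he with rfl | rfl | rfl | rfl <;> simp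
  no_into_I := by
    intro e he
    simp only [Set.mem_insert_iff, Set.mem_singleton_iff] at he
    rcases he with rfl | rfl | rfl | rfl <;> simp
  no_outof_O := by
    intro e he
    simp only [Set.mem_insert_iff, Set.mem_singleton_iff] at he
    rcases he with rfl | rfl | rfl | rfl <;> simp

def exP : IOPartition exG where
  Psi := {0, 1}
  Om := {2, 3}
  union_eq := by ext x; simp [exG]; tauto
  disj := by
    rw [Set.disjoint_left]
    intro x hx hx'
    simp only [Set.mem_insert_iff, Set.mem_singleton_iff] at hx hx'
    omega
  I_sub := by intro x hx; exact hx
  O_sub := by intro x hx; exact hx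

def exP' : IOPartition exG' where
  Psi := {4, 5}
  Om := {6, 7}
  union_eq := by ext x; simp [exG']; tauto
  disj := by
    rw [Set.disjoint_left]
    intro x hx hx'
    simp only [Set.mem_insert_iff, Set.mem_singleton_iff] at hx hx'
    omega
  I_sub := by intro x hx; exact hx
  O_sub := by intro x hx; exact hx

lemma exFwd_eq : Fwd exG exP = ({(0, 2), (0, 3), (1, 2), (1, 3)} : Set (ℕ × ℕ)) := by
  ext e
  constructor
  · rintro ⟨he, -, -⟩; exact he
  · intro he
    simp only [Set.mem_insert_iff, Set.mem_singleton_iff] at he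
    refine ⟨he, ?_, ?_⟩ <;>
      rcases he with rfl | rfl | rfl | rfl <;>
      simp [exP]

lemma exFwd'_eq : Fwd exG' exP' = ({(4, 6), (4, 7), (5, 6), (5, 7)} : Set (ℕ × ℕ)) := by
  ext e
  constructor
  · rintro ⟨he, -, -⟩; exact he
  · intro he
    simp only [Set.mem_insert_iff, Set.mem_singleton_iff] at he
    refine ⟨he, ?_, ?_⟩ <;>
      rcases he with rfl | rfl | rfl | rfl <;>
      simp [exP']

lemma exBwd_eq : Bwd exG exP = (∅ : Set (ℕ × ℕ)) := by
  ext e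
  simp only [Set.mem_empty_iff_false, iff_false]
  rintro ⟨he, h1, -⟩
  simp only [exG, Set.mem_insert_iff, Set.mem_singleton_iff] at he
  rcases he with rfl | rfl | rfl | rfl <;>
    simp only [exP, Set.mem_insert_iff, Set.mem_singleton_iff] at h1 <;> omega

lemma exBwd'_eq : Bwd exG' exP' = (∅ : Set (ℕ × ℕ)) := by
  ext e
  simp only [Set.mem_empty_iff_false, iff_false]
  rintro ⟨he, h1, -⟩
  simp only [exG', Set.mem_insert_iff, Set.mem_singleton_iff] at he
  rcases he with rfl | rfl | rfl | rfl <;>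
    simp only [exP', Set.mem_insert_iff, Set.mem_singleton_iff] at h1 <;> omega

instance : IsEmpty (Bwd exG exP) := by rw [exBwd_eq]; exact Set.isEmpty_coe_sort.mpr rfl
instance : IsEmpty (Bwd exG' exP') := by rw [exBwd'_eq]; exact Set.isEmpty_coe_sort.mpr rfl

lemma exg_mem (e : ℕ × ℕ) (he : e ∈ Fwd exG exP) :
    (e.2 + 2, 7 - e.1) ∈ Fwd exG' exP' := by
  rw [exFwd_eq] at he
  rw [exFwd'_eq]
  simp only [Set.mem_insert_iff, Set.mem_singleton_iff] at he ⊢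
  rcases he with rfl | rfl | rfl | rfl <;> simp

lemma exg_inv_mem (e : ℕ × ℕ) (he : e ∈ Fwd exG' exP') :
    (7 - e.2, e.1 - 2) ∈ Fwd exG exP := by
  rw [exFwd'_eq] at he
  rw [exFwd_eq]
  simp only [Set.mem_insert_iff, Set.mem_singleton_iff] at he ⊢
  rcases he with rfl | rfl | rfl | rfl <;> simp

/-- The mis-routing forward bijection. -/
def exg : Fwd exG exP ≃ Fwd exG' exP' where
  toFun f := ⟨((f : ℕ × ℕ).2 + 2, 7 - (f : ℕ × ℕ).1), exg_mem _ f.2⟩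
  invFun f := ⟨(7 - (f : ℕ × ℕ).2, (f : ℕ × ℕ).1 - 2), exg_inv_mem _ f.2⟩
  left_inv := by
    rintro ⟨e, he⟩
    rw [exFwd_eq] at he
    simp only [Set.mem_insert_iff, Set.mem_singleton_iff] at he
    rcases he with rfl | rfl | rfl | rfl <;> rfl
  right_inv := by
    rintro ⟨e, he⟩
    rw [exFwd'_eq] at he
    simp only [Set.mem_insert_iff, Set.mem_singleton_iff] at he
    rcases he with rfl | rfl | rfl | rfl <;> rfl

def exh : Bwd exG' exP' ≃ Bwd exG exP := Equiv.equivOfIsEmpty _ _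

lemma exChildEdges_eq :
    childEdges exG exG' exP exP' exg exh = ({(0, 7), (1, 6)} : Set (ℕ × ℕ)) := by
  ext e
  constructor
  · rintro ((⟨he, h1, h2⟩ | ⟨he, h1, h2⟩) | hm)
    · exfalso
      simp only [exG, Set.mem_insert_iff, Set.mem_singleton_iff] at he
      rcases he with rfl | rfl | rfl | rfl <;>
        simp only [exP, Set.mem_insert_iff, Set.mem_singleton_iff] at h2 <;> omega
    · exfalso
      simp only [exG', Set.mem_insert_iff, Set.mem_singleton_iff] at he
      rcases he with rfl | rfl | rfl | rfl <;>
        simp only [exP', Set.mem_insert_iff, Set.mem_singleton_iff] at h1 <;> omega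
    · rcases hm with ⟨⟨f, hf⟩, rfl⟩ | ⟨⟨b, hb⟩, -⟩
      · have hf' := hf
        rw [exFwd_eq] at hf'
        simp only [Set.mem_insert_iff, Set.mem_singleton_iff] at hf' ⊢
        rcases hf' with rfl | rfl | rfl | rfl <;> simp [exg]
      · exact absurd hb (by rw [exBwd'_eq]; simp)
  · intro he
    simp only [Set.mem_insert_iff, Set.mem_singleton_iff] at he
    right
    left
    rcases he with rfl | rfl
    · exact ⟨⟨(0, 2), by rw [exFwd_eq]; simp⟩, rfl⟩
    · exact ⟨⟨(1, 2), by rw [exFwd_eq]; simp⟩, rfl⟩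



/-- full informativeness need not be preserved: there are fully
informative parents satisfying the no dangling nodes condition, with
contiguous, crossover compatible IO partitions and a crossover membrane,
whose crossover child is not fully informative. -/
theorem full_informativeness_not_preserved :
    ∃ (V : Type) (G G' : IODGraph V) (P : IOPartition G) (P' : IOPartition G')
      (g : Fwd G P ≃ Fwd G' P') (h : Bwd G' P' ≃ Bwd G P),
      FullyInformative G ∧ FullyInformative G' ∧
      NoDangling G ∧ NoDangling G' ∧
      InputContiguous G P ∧ OutputContiguous G P ∧
      InputContiguous G' P' ∧ OutputContiguous G' P' ∧
      CrossCompat G G' P P' ∧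
      (∃ i ∈ G.I, ∃ o' ∈ G'.O, ¬ childReach G G' P P' g h i o') := by
  refine ⟨ℕ, exG, exG', exP, exP', exg, exh, ?_, ?_, ?_, ?_, ?_, ?_, ?_, ?_, ?_, ?_⟩
  · -- FullyInformative exG
    intro i hi o ho
    simp only [exG, Set.mem_insert_iff, Set.mem_singleton_iff] at hi ho
    refine Relation.ReflTransGen.single ?_
    rcases hi with rfl | rfl <;> rcases ho with rfl | rfl <;> simp [exG]
  · intro i hi o ho
    simp only [exG', Set.mem_insert_iff, Set.mem_singleton_iff] at hi ho
    refine Relation.ReflTransGen.single ?_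
    rcases hi with rfl | rfl <;> rcases ho with rfl | rfl <;> simp [exG']
  · -- NoDangling exG
    intro n hn
    exfalso
    obtain ⟨h1, h2⟩ := hn
    simp only [exG, Set.mem_insert_iff, Set.mem_singleton_iff, Set.mem_union] at h1 h2
    tauto
  · intro n hn
    exfalso
    obtain ⟨h1, h2⟩ := hn
    simp only [exG', Set.mem_insert_iff, Set.mem_singleton_iff, Set.mem_union] at h1 h2
    tauto
  · -- contiguity: Psi \ I = ∅
    intro n hn
    exfalso
    obtain ⟨h1, h2⟩ := hn
    exact h2 h1
  · intro n hn
    exfalso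
    obtain ⟨h1, h2⟩ := hn
    exact h2 h1
  · intro n hn
    exfalso
    obtain ⟨h1, h2⟩ := hn
    exact h2 h1
  · intro n hn
    exfalso
    obtain ⟨h1, h2⟩ := hn
    exact h2 h1
  · -- CrossCompat
    refine ⟨?_, ?_, ?_, ?_, ?_, ?_, ?_, ?_⟩
    · ext x
      simp only [Set.mem_inter_iff, exP, exP', Set.mem_insert_iff, Set.mem_singleton_iff,
        Set.mem_empty_iff_false, iff_false, not_and]
      omega
    · ext x
      simp only [Set.mem_inter_iff, exP, exP', Set.mem_insert_iff, Set.mem_singleton_iff,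
        Set.mem_empty_iff_false, iff_false, not_and]
      omega
    · rw [exFwd_eq]; exact (Set.finite_singleton _).insert _ |>.insert _ |>.insert _
    · rw [exFwd'_eq]; exact (Set.finite_singleton _).insert _ |>.insert _ |>.insert _
    · rw [exBwd_eq]; exact Set.finite_empty
    · rw [exBwd'_eq]; exact Set.finite_empty
    · rw [exFwd_eq, exFwd'_eq]
      rw [show ({(0, 2), (0, 3), (1, 2), (1, 3)} : Set (ℕ × ℕ))
            = (↑({(0, 2), (0, 3), (1, 2), (1, 3)} : Finset (ℕ × ℕ))) by simp,
          show ({(4, 6), (4, 7), (5, 6), (5, 7)} : Set (ℕ × ℕ))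
            = (↑({(4, 6), (4, 7), (5, 6), (5, 7)} : Finset (ℕ × ℕ))) by simp]
      rw [Set.ncard_coe_finset, Set.ncard_coe_finset]
      rfl
    · rw [exBwd_eq, exBwd'_eq]
  · -- not fully informative child
    refine ⟨0, by simp [exG], 6, by simp [exG'], ?_⟩
    intro hreach
    have key : ∀ x, childReach exG exG' exP exP' exg exh 0 x → x = 0 ∨ x = 7 := by
      intro x hx
      induction hx with
      | refl => left; rfl
      | tail _ he ih =>
        rw [exChildEdges_eq] at he
        simp only [Set.mem_insert_iff, Set.mem_singleton_iff, Prod.mk.injEq] at he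
        rcases ih with rfl | rfl <;> omega
    rcases key 6 hreach with h | h <;> omega
end

section
/- Let IOD graphs G and G' both be partially actionable and both satisfy the no dangling nodes condition. Then any crossover child produced from an input-contiguous IO partition (Ψ,Ω) of input parent G and an output-contiguous IO partition (Ψ',Ω') of output parent G' (the partitions being crossover compatible) is partially actionable: the child contains a directed path from some input in I to some output in O'. -/
open IODGraph

/-- Helper: a path in `G` from a node of `Ψ` to a node of `Ω` must use a forward link. -/
theorem exists_fwd_of_reach {V : Type} (G : IODGraph V) (P : IOPartition G) :
    ∀ x o, o ∈ P.Om → G.Reach x o → x ∈ P.Psi → ∃ e, e ∈ Fwd G P := by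
  intro x o ho hr
  induction hr using Relation.ReflTransGen.head_induction_on with
  | refl => intro hx; exact absurd ho (Set.disjoint_left.mp P.disj hx)
  | head hab _ ih =>
    rename_i a b _
    intro ha
    have hbN : b ∈ G.N := (G.E_mem _ hab).2
    rw [← P.union_eq] at hbN
    rcases hbN with hb | hb
    · exact ih hb
    · exact ⟨(a, b), hab, ha, hb⟩

/-- partially actionable parents satisfying the no dangling
nodes condition, crossed over along an input-contiguous partition of the input
parent and an output-contiguous partition of the output parent, yield a
partially actionable child. -/
theorem crossover_child_partially_actionable {V : Type} (G G' : IODGraph V)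
    (hG : PartiallyActionable G) (hG' : PartiallyActionable G')
    (hdG : NoDangling G) (hdG' : NoDangling G')
    (P : IOPartition G) (P' : IOPartition G')
    (hIC : InputContiguous G P) (hOC : OutputContiguous G' P')
    (hc : CrossCompat G G' P P')
    (g : Fwd G P ≃ Fwd G' P') (h : Bwd G' P' ≃ Bwd G P) :
    ∃ i ∈ G.I, ∃ o' ∈ G'.O, childReach G G' P P' g h i o' := by
  -- lifting lemmas
  have liftPsi : ∀ a b, G.ReachWithin P.Psi a b → childReach G G' P P' g h a b :=
    fun a b hr => Relation.ReflTransGen.mono (p := fun x y => (x, y) ∈ childEdges G G' P P' g h)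
      (fun x y hxy => Or.inl (Or.inl ⟨hxy.1, hxy.2.1, hxy.2.2⟩)) a b hr
  have liftOm' : ∀ a b, G'.ReachWithin P'.Om a b → childReach G G' P P' g h a b :=
    fun a b hr => Relation.ReflTransGen.mono (p := fun x y => (x, y) ∈ childEdges G G' P P' g h)
      (fun x y hxy => Or.inl (Or.inr ⟨hxy.1, hxy.2.1, hxy.2.2⟩)) a b hr
  -- there is a forward link in G
  obtain ⟨i0, hi0, o0, ho0, hreach⟩ := hG
  obtain ⟨e, he⟩ := exists_fwd_of_reach G P i0 o0 (P.O_sub ho0) hreach (P.I_sub hi0)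
  set f : Fwd G P := ⟨e, he⟩ with hf
  -- membrane edge from e.1 to (g f).2
  have hmem : (e.1, ((g f : V × V)).2) ∈ childEdges G G' P P' g h :=
    Or.inr (Or.inl ⟨f, rfl⟩)
  have htail : ∀ {i : V}, childReach G G' P P' g h i e.1 →
      childReach G G' P P' g h i ((g f : V × V)).2 :=
    fun hr => Relation.ReflTransGen.tail hr hmem
  -- from some input to e.1
  have h1 : ∃ i ∈ G.I, childReach G G' P P' g h i e.1 := by
    by_cases hi : e.1 ∈ G.I
    · exact ⟨e.1, hi, Relation.ReflTransGen.refl⟩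
    · obtain ⟨i, hiI, hri⟩ := hIC e.1 ⟨he.2.1, hi⟩
      exact ⟨i, hiI, liftPsi _ _ hri⟩
  -- from (g f).2 to some output of G'
  have h2 : ∃ o' ∈ G'.O, childReach G G' P P' g h ((g f : V × V)).2 o' := by
    have hm : ((g f : V × V)).2 ∈ P'.Om := (g f).2.2.2
    by_cases ho : ((g f : V × V)).2 ∈ G'.O
    · exact ⟨_, ho, Relation.ReflTransGen.refl⟩
    · obtain ⟨o', ho'O, hro⟩ := hOC _ ⟨hm, ho⟩
      exact ⟨o', ho'O, liftOm' _ _ hro⟩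
  obtain ⟨i, hiI, hri⟩ := h1
  obtain ⟨o', ho'O, hro⟩ := h2
  exact ⟨i, hiI, o', ho'O, (htail hri).trans hro⟩
end

section
/- Suppose input parent IOD graph G is partially actionable, output parent IOD graph G' is very actionable, and both satisfy the no dangling nodes condition. Then any crossover child produced from an input-contiguous IO partition (Ψ,Ω) of G and an output-contiguous IO partition (Ψ',Ω') of G' (the partitions being crossover compatible) is very actionable: for every output o' ∈ O' there is a directed path in the child from some input in I to o'. -/
open IODGraph

/-- a partially actionable input parent and a very actionable
output parent, both satisfying the no dangling nodes condition, crossed over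
along an input-contiguous partition of the input parent and an
output-contiguous partition of the output parent, yield a very actionable
child: every output in `O'` is reached from some input in `I`. -/
theorem crossover_child_very_actionable {V : Type} (G G' : IODGraph V)
    (hG : PartiallyActionable G) (hG' : VeryActionable G')
    (hdG : NoDangling G) (hdG' : NoDangling G')
    (P : IOPartition G) (P' : IOPartition G')
    (hIC : InputContiguous G P) (hOC : OutputContiguous G' P')
    (hc : CrossCompat G G' P P')
    (g : Fwd G P ≃ Fwd G' P') (h : Bwd G' P' ≃ Bwd G P) :
    ∀ o' ∈ G'.O, ∃ i ∈ G.I, childReach G G' P P' g h i o' := by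
  intro o' ho'
  obtain ⟨i', hi', hreach⟩ := hG' o' ho'
  -- Key claim: any node reaching o' in G' either lies in Ω' and reaches o'
  -- within Ω', or there is a forward link of G' whose destination reaches o'
  -- within Ω'.
  have key : ∀ x : V, G'.Reach x o' →
      (x ∈ P'.Om ∧ G'.ReachWithin P'.Om x o') ∨
      (∃ f' ∈ Fwd G' P', G'.ReachWithin P'.Om f'.2 o') := by
    intro x hx
    induction hx using Relation.ReflTransGen.head_induction_on with
    | refl => exact Or.inl ⟨P'.O_sub ho', Relation.ReflTransGen.refl⟩
    | head hxy _ ih =>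
      rename_i a b _
      rcases ih with ⟨hbΩ, hb⟩ | hr
      · have haN : a ∈ G'.N := (G'.E_mem _ hxy).1
        rw [← P'.union_eq] at haN
        rcases haN with haΨ | haΩ
        · exact Or.inr ⟨(a, b), ⟨hxy, haΨ, hbΩ⟩, hb⟩
        · exact Or.inl ⟨haΩ, Relation.ReflTransGen.head ⟨hxy, haΩ, hbΩ⟩ hb⟩
      · exact Or.inr hr
  have hi'Ψ : i' ∈ P'.Psi := P'.I_sub hi'
  rcases key i' hreach with ⟨hmem, _⟩ | ⟨f', hf', hfo⟩
  · exact absurd hmem (Set.disjoint_left.mp P'.disj hi'Ψ)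
  -- pull the forward link back into G via g
  set f : Fwd G P := g.symm ⟨f', hf'⟩ with hfdef
  have hgf : (g f : V × V) = f' := by
    simp [hfdef]
  obtain ⟨hfE, hf1Ψ, hf2Ω⟩ := f.2
  -- the membrane edge from f.1 to f'.2
  have hmembrane : ((f : V × V).1, f'.2) ∈ childEdges G G' P P' g h := by
    refine Or.inr (Or.inl ⟨f, ?_⟩)
    show ((f : V × V).1, (g f : V × V).2) = _
    rw [hgf]
  -- lift the within-Ω' path to the child
  have hΩlift : childReach G G' P P' g h f'.2 o' := by
    refine Relation.ReflTransGen.mono ?_ _ _ hfo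
    rintro a b ⟨hab, haΩ, hbΩ⟩
    exact Or.inl (Or.inr ⟨hab, haΩ, hbΩ⟩)
  have hfromf1 : childReach G G' P P' g h (f : V × V).1 o' :=
    Relation.ReflTransGen.head hmembrane hΩlift
  by_cases hI : (f : V × V).1 ∈ G.I
  · exact ⟨(f : V × V).1, hI, hfromf1⟩
  · obtain ⟨i, hi, hpath⟩ := hIC (f : V × V).1 ⟨hf1Ψ, hI⟩
    have hΨlift : childReach G G' P P' g h i (f : V × V).1 := by
      refine Relation.ReflTransGen.mono ?_ _ _ hpath
      rintro a b ⟨hab, haΨ, hbΨ⟩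
      exact Or.inl (Or.inl ⟨hab, haΨ, hbΨ⟩)
    exact ⟨i, hi, hΨlift.trans hfromf1⟩
end

section
/- There exist IOD graphs G and G', both fully actionable and both satisfying the no dangling nodes condition, together with a contiguous IO partition (Ψ,Ω) of G and a contiguous IO partition (Ψ',Ω') of G' that are crossover compatible, and a crossover membrane, such that the resulting crossover child is not fully actionable (some input i ∈ I and some output o' ∈ O' have no directed path from i to o' in the child). -/
open IODGraph

-- Counterexample construction
namespace CEx

def G0 : IODGraph (Fin 8) where
  N := {0, 1, 2, 3}
  E := {(0, 2), (1, 2), (2, 3)}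
  I := {0, 1}
  O := {3}
  I_sub := by intro x hx; simp only [Set.mem_insert_iff, Set.mem_singleton_iff] at hx ⊢; tauto
  O_sub := by intro x hx; simp only [Set.mem_insert_iff, Set.mem_singleton_iff] at hx ⊢; tauto
  disjIO := by
    rw [Set.disjoint_left]; intro x hx hx'
    simp only [Set.mem_insert_iff, Set.mem_singleton_iff] at hx hx'
    rcases hx with rfl | rfl <;> simp_all
  E_mem := by
    intro e he; simp only [Set.mem_insert_iff, Set.mem_singleton_iff] at he
    rcases he with rfl | rfl | rfl <;> exact ⟨by simp, by simp⟩
  no_into_I := by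
    intro e he; simp only [Set.mem_insert_iff, Set.mem_singleton_iff] at he
    rcases he with rfl | rfl | rfl <;> simp
  no_outof_O := by
    intro e he; simp only [Set.mem_insert_iff, Set.mem_singleton_iff] at he
    rcases he with rfl | rfl | rfl <;> simp

def G1 : IODGraph (Fin 8) where
  N := {4, 5, 6, 7}
  E := {(4, 5), (5, 6), (5, 7)}
  I := {4}
  O := {6, 7}
  I_sub := by intro x hx; simp only [Set.mem_insert_iff, Set.mem_singleton_iff] at hx ⊢; tauto
  O_sub := by intro x hx; simp only [Set.mem_insert_iff, Set.mem_singleton_iff] at hx ⊢; tauto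
  disjIO := by
    rw [Set.disjoint_left]; intro x hx hx'
    simp only [Set.mem_insert_iff, Set.mem_singleton_iff] at hx hx'
    rcases hx' with rfl | rfl <;> simp_all
  E_mem := by
    intro e he; simp only [Set.mem_insert_iff, Set.mem_singleton_iff] at he
    rcases he with rfl | rfl | rfl <;> exact ⟨by simp, by simp⟩
  no_into_I := by
    intro e he; simp only [Set.mem_insert_iff, Set.mem_singleton_iff] at he
    rcases he with rfl | rfl | rfl <;> simp
  no_outof_O := by
    intro e he; simp only [Set.mem_insert_iff, Set.mem_singleton_iff] at he
    rcases he with rfl | rfl | rfl <;> simp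

def P0 : IOPartition G0 where
  Psi := {0, 1}
  Om := {2, 3}
  union_eq := by ext x; simp [G0]; tauto
  disj := by
    rw [Set.disjoint_left]; intro x hx hx'
    simp only [Set.mem_insert_iff, Set.mem_singleton_iff] at hx hx'
    rcases hx with rfl | rfl <;> simp_all
  I_sub := by intro x hx; exact hx
  O_sub := by intro x hx; simp only [Set.mem_singleton_iff, G0] at hx; simp [hx]

def P1 : IOPartition G1 where
  Psi := {4, 5}
  Om := {6, 7}
  union_eq := by ext x; simp [G1]; tauto
  disj := by
    rw [Set.disjoint_left]; intro x hx hx'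
    simp only [Set.mem_insert_iff, Set.mem_singleton_iff] at hx hx'
    rcases hx with rfl | rfl <;> simp_all
  I_sub := by intro x hx; simp only [Set.mem_singleton_iff, G1] at hx; simp [hx]
  O_sub := by intro x hx; exact hx

lemma fwd0 : Fwd G0 P0 = {((0 : Fin 8), (2 : Fin 8)), (1, 2)} := by
  ext e
  simp only [Fwd, Set.mem_setOf_eq, Set.mem_insert_iff, Set.mem_singleton_iff, G0, P0]
  constructor
  · rintro ⟨(rfl | rfl | rfl), h1, h2⟩ <;> simp_all
  · rintro (rfl | rfl) <;> refine ⟨by simp, by simp, by simp⟩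

lemma fwd1 : Fwd G1 P1 = {((5 : Fin 8), (6 : Fin 8)), (5, 7)} := by
  ext e
  simp only [Fwd, Set.mem_setOf_eq, Set.mem_insert_iff, Set.mem_singleton_iff, G1, P1]
  constructor
  · rintro ⟨(rfl | rfl | rfl), h1, h2⟩ <;> simp_all
  · rintro (rfl | rfl) <;> refine ⟨by simp, by simp, by simp⟩

lemma bwd0 : Bwd G0 P0 = ∅ := by
  ext e
  simp only [Bwd, Set.mem_setOf_eq, Set.mem_empty_iff_false, iff_false, not_and, G0, P0]
  rintro (rfl | rfl | rfl) <;> simp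

lemma bwd1 : Bwd G1 P1 = ∅ := by
  ext e
  simp only [Bwd, Set.mem_setOf_eq, Set.mem_empty_iff_false, iff_false, not_and, G1, P1]
  rintro (rfl | rfl | rfl) <;> simp

instance : IsEmpty (Bwd G0 P0) := by rw [bwd0]; exact Set.instIsEmptyElemEmptyCollection _
instance : IsEmpty (Bwd G1 P1) := by rw [bwd1]; exact Set.instIsEmptyElemEmptyCollection _

lemma mem_fwd0_iff (e : Fin 8 × Fin 8) : e ∈ Fwd G0 P0 ↔ e = (0, 2) ∨ e = (1, 2) := by
  rw [fwd0]; simp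

lemma mem_fwd1_iff (e : Fin 8 × Fin 8) : e ∈ Fwd G1 P1 ↔ e = (5, 6) ∨ e = (5, 7) := by
  rw [fwd1]; simp

def gEquiv : Fwd G0 P0 ≃ Fwd G1 P1 where
  toFun x := if x.1.1 = 0 then ⟨(5, 6), (mem_fwd1_iff _).2 (Or.inl rfl)⟩
             else ⟨(5, 7), (mem_fwd1_iff _).2 (Or.inr rfl)⟩
  invFun y := if y.1.2 = 6 then ⟨(0, 2), (mem_fwd0_iff _).2 (Or.inl rfl)⟩
              else ⟨(1, 2), (mem_fwd0_iff _).2 (Or.inr rfl)⟩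
  left_inv := by
    rintro ⟨e, he⟩
    rcases (mem_fwd0_iff e).1 he with rfl | rfl <;> simp
  right_inv := by
    rintro ⟨e, he⟩
    rcases (mem_fwd1_iff e).1 he with rfl | rfl <;> simp

def hEquiv : Bwd G1 P1 ≃ Bwd G0 P0 := Equiv.equivOfIsEmpty _ _

lemma child_edges_eq :
    childEdges G0 G1 P0 P1 gEquiv hEquiv = {((0 : Fin 8), (6 : Fin 8)), (1, 7)} := by
  ext e
  simp only [childEdges, membraneEdges, Set.mem_union, Set.mem_setOf_eq, Set.mem_range,
    Set.mem_insert_iff, Set.mem_singleton_iff]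
  constructor
  · rintro ((⟨he, h1, h2⟩ | ⟨he, h1, h2⟩) | (⟨⟨f, hf⟩, rfl⟩ | ⟨⟨b, hb⟩, rfl⟩))
    · exfalso
      simp only [G0, P0, Set.mem_insert_iff, Set.mem_singleton_iff] at he h1 h2
      rcases he with rfl | rfl | rfl <;> simp_all
    · exfalso
      simp only [G1, P1, Set.mem_insert_iff, Set.mem_singleton_iff] at he h1 h2
      rcases he with rfl | rfl | rfl <;> simp_all
    · rcases (mem_fwd0_iff f).1 hf with rfl | rfl <;>
        simp [gEquiv, Subtype.ext_iff]
    · exact (IsEmpty.false (⟨b, hb⟩ : Bwd G1 P1)).elim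
  · rintro (rfl | rfl)
    · refine Or.inr (Or.inl ⟨⟨(0, 2), (mem_fwd0_iff _).2 (Or.inl rfl)⟩, ?_⟩)
      simp [gEquiv]
    · refine Or.inr (Or.inl ⟨⟨(1, 2), (mem_fwd0_iff _).2 (Or.inr rfl)⟩, ?_⟩)
      simp [gEquiv]

end CEx

/-- full actionability need not be preserved: there are fully
actionable parents satisfying the no dangling nodes condition, with
contiguous, crossover compatible IO partitions and a crossover membrane,
whose crossover child is not fully actionable. -/
theorem full_actionability_not_preserved :
    ∃ (V : Type) (G G' : IODGraph V) (P : IOPartition G) (P' : IOPartition G')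
      (g : Fwd G P ≃ Fwd G' P') (h : Bwd G' P' ≃ Bwd G P),
      FullyActionable G ∧ FullyActionable G' ∧
      NoDangling G ∧ NoDangling G' ∧
      InputContiguous G P ∧ OutputContiguous G P ∧
      InputContiguous G' P' ∧ OutputContiguous G' P' ∧
      CrossCompat G G' P P' ∧
      (∃ i ∈ G.I, ∃ o' ∈ G'.O, ¬ childReach G G' P P' g h i o') := by
  refine ⟨Fin 8, CEx.G0, CEx.G1, CEx.P0, CEx.P1, CEx.gEquiv, CEx.hEquiv,
    ?_, ?_, ?_, ?_, ?_, ?_, ?_, ?_, ?_, ?_⟩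
  · -- FullyActionable G0
    intro i hi o ho
    simp only [CEx.G0, Set.mem_insert_iff, Set.mem_singleton_iff] at hi ho
    subst ho
    have h23 : CEx.G0.Reach 2 3 := Relation.ReflTransGen.single (by simp [CEx.G0])
    rcases hi with rfl | rfl
    · exact Relation.ReflTransGen.head (by simp [CEx.G0]) h23
    · exact Relation.ReflTransGen.head (by simp [CEx.G0]) h23
  · -- FullyActionable G1
    intro i hi o ho
    simp only [CEx.G1, Set.mem_insert_iff, Set.mem_singleton_iff] at hi ho
    subst hi
    rcases ho with rfl | rfl
    · exact Relation.ReflTransGen.head (b := 5) (by simp [CEx.G1])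
        (Relation.ReflTransGen.single (by simp [CEx.G1]))
    · exact Relation.ReflTransGen.head (b := 5) (by simp [CEx.G1])
        (Relation.ReflTransGen.single (by simp [CEx.G1]))
  · -- NoDangling G0
    intro n hn
    have hn2 : n = 2 := by
      rcases hn with ⟨h1, h2⟩
      simp only [CEx.G0, Set.mem_insert_iff, Set.mem_singleton_iff, Set.mem_union] at h1 h2
      rcases h1 with rfl | rfl | rfl | rfl <;> simp_all
    subst hn2
    exact ⟨0, by simp [CEx.G0], 3, by simp [CEx.G0],
      Relation.ReflTransGen.single (by simp [CEx.G0]),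
      Relation.ReflTransGen.single (by simp [CEx.G0])⟩
  · -- NoDangling G1
    intro n hn
    have hn2 : n = 5 := by
      rcases hn with ⟨h1, h2⟩
      simp only [CEx.G1, Set.mem_insert_iff, Set.mem_singleton_iff, Set.mem_union] at h1 h2
      rcases h1 with rfl | rfl | rfl | rfl <;> simp_all
    subst hn2
    exact ⟨4, by simp [CEx.G1], 6, by simp [CEx.G1],
      Relation.ReflTransGen.single (by simp [CEx.G1]),
      Relation.ReflTransGen.single (by simp [CEx.G1])⟩
  · -- InputContiguous G0 P0
    intro n hn
    exfalso
    rcases hn with ⟨h1, h2⟩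
    simp only [CEx.P0, CEx.G0, Set.mem_insert_iff, Set.mem_singleton_iff] at h1 h2
    tauto
  · -- OutputContiguous G0 P0
    intro n hn
    have hn2 : n = 2 := by
      rcases hn with ⟨h1, h2⟩
      simp only [CEx.P0, CEx.G0, Set.mem_insert_iff, Set.mem_singleton_iff] at h1 h2
      tauto
    subst hn2
    exact ⟨3, by simp [CEx.G0],
      Relation.ReflTransGen.single ⟨by simp [CEx.G0], by simp [CEx.P0], by simp [CEx.P0]⟩⟩
  · -- InputContiguous G1 P1
    intro n hn
    have hn2 : n = 5 := by
      rcases hn with ⟨h1, h2⟩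
      simp only [CEx.P1, CEx.G1, Set.mem_insert_iff, Set.mem_singleton_iff] at h1 h2
      tauto
    subst hn2
    exact ⟨4, by simp [CEx.G1],
      Relation.ReflTransGen.single ⟨by simp [CEx.G1], by simp [CEx.P1], by simp [CEx.P1]⟩⟩
  · -- OutputContiguous G1 P1
    intro n hn
    exfalso
    rcases hn with ⟨h1, h2⟩
    simp only [CEx.P1, CEx.G1, Set.mem_insert_iff, Set.mem_singleton_iff] at h1 h2
    tauto
  · -- CrossCompat
    refine ⟨?_, ?_, ?_, ?_, ?_, ?_, ?_, ?_⟩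
    · ext x
      simp only [CEx.P0, CEx.P1, Set.mem_inter_iff, Set.mem_insert_iff, Set.mem_singleton_iff,
        Set.mem_empty_iff_false, iff_false, not_and]
      rintro (rfl | rfl) <;> simp
    · ext x
      simp only [CEx.P0, CEx.P1, Set.mem_inter_iff, Set.mem_insert_iff, Set.mem_singleton_iff,
        Set.mem_empty_iff_false, iff_false, not_and]
      rintro (rfl | rfl) <;> simp
    · rw [CEx.fwd0]; exact (Set.finite_singleton _).insert _
    · rw [CEx.fwd1]; exact (Set.finite_singleton _).insert _
    · rw [CEx.bwd0]; exact Set.finite_empty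
    · rw [CEx.bwd1]; exact Set.finite_empty
    · rw [CEx.fwd0, CEx.fwd1]
      rw [Set.ncard_pair (by simp), Set.ncard_pair (by simp)]
    · rw [CEx.bwd0, CEx.bwd1]
  · -- failure of full actionability in the child
    refine ⟨0, by simp [CEx.G0], 7, by simp [CEx.G1], ?_⟩
    intro hreach
    have key : ∀ y : Fin 8, childReach CEx.G0 CEx.G1 CEx.P0 CEx.P1 CEx.gEquiv CEx.hEquiv 0 y →
        y = 0 ∨ y = 6 := by
      intro y hy
      induction hy with
      | refl => exact Or.inl rfl
      | tail _ hstep ih =>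
        rw [CEx.child_edges_eq] at hstep
        simp only [Set.mem_insert_iff, Set.mem_singleton_iff, Prod.ext_iff] at hstep
        rcases ih with rfl | rfl <;> rcases hstep with ⟨h1, h2⟩ | ⟨h1, h2⟩ <;> simp_all
    rcases key 7 hreach with h | h <;> simp at h
end

section
/- There exist IOD graphs G and G', both non-informative (containing no directed path from any input to any output), together with crossover compatible IO partitions (Ψ,Ω) of G and (Ψ',Ω') of G' and a crossover membrane, such that the resulting crossover child is fully informative: for every input i ∈ I and every output o' ∈ O' there is a directed path in the child from i to o'. -/
open IODGraph


/-! ### Auxiliary construction for Statement 15 -/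

noncomputable section Stmt15Aux

/-- Parent `G`: nodes `{0,1,2}`, input `0`, output `1`, single edge `(0,2)`. -/
def Gex : IODGraph ℕ where
  N := {0, 1, 2}
  E := {(0, 2)}
  I := {0}
  O := {1}
  I_sub := by intro x hx; simp at hx; simp [hx]
  O_sub := by intro x hx; simp at hx; simp [hx]
  disjIO := by simp [Set.disjoint_left]
  E_mem := by intro e he; simp at he; simp [he]
  no_into_I := by intro e he; simp at he; simp [he]
  no_outof_O := by intro e he; simp at he; simp [he]

/-- Parent `G'`: nodes `{3,4,5}`, input `3`, output `4`, single edge `(5,4)`. -/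
def Gex' : IODGraph ℕ where
  N := {3, 4, 5}
  E := {(5, 4)}
  I := {3}
  O := {4}
  I_sub := by intro x hx; simp at hx; simp [hx]
  O_sub := by intro x hx; simp at hx; simp [hx]
  disjIO := by simp [Set.disjoint_left]
  E_mem := by intro e he; simp at he; simp [he]
  no_into_I := by intro e he; simp at he; simp [he]
  no_outof_O := by intro e he; simp at he; simp [he]

def Pex : IOPartition Gex where
  Psi := {0}
  Om := {1, 2}
  union_eq := by ext x; simp [Gex]; tauto
  disj := by simp [Set.disjoint_left]
  I_sub := by simp [Gex]
  O_sub := by intro x hx; simp [Gex] at hx; simp [hx]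

def Pex' : IOPartition Gex' where
  Psi := {3, 5}
  Om := {4}
  union_eq := by ext x; simp [Gex']; tauto
  disj := by simp [Set.disjoint_left]
  I_sub := by intro x hx; simp [Gex'] at hx; simp [hx]
  O_sub := by simp [Gex']

lemma fwd_eq : Fwd Gex Pex = {(0, 2)} := by
  ext ⟨a, b⟩
  simp [Fwd, Gex, Pex]
  aesop

lemma fwd'_eq : Fwd Gex' Pex' = {(5, 4)} := by
  ext ⟨a, b⟩
  simp [Fwd, Gex', Pex']
  aesop

lemma bwd_eq : Bwd Gex Pex = ∅ := by
  ext ⟨a, b⟩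
  simp [Bwd, Gex, Pex]
  aesop

lemma bwd'_eq : Bwd Gex' Pex' = ∅ := by
  ext ⟨a, b⟩
  simp [Bwd, Gex', Pex']
  aesop

lemma mem_fwd : ((0, 2) : ℕ × ℕ) ∈ Fwd Gex Pex := by rw [fwd_eq]; simp

lemma mem_fwd' : ((5, 4) : ℕ × ℕ) ∈ Fwd Gex' Pex' := by rw [fwd'_eq]; simp

def gex : Fwd Gex Pex ≃ Fwd Gex' Pex' where
  toFun := fun _ => ⟨(5, 4), mem_fwd'⟩
  invFun := fun _ => ⟨(0, 2), mem_fwd⟩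
  left_inv := by
    rintro ⟨x, hx⟩
    rw [fwd_eq] at hx
    simp_all
  right_inv := by
    rintro ⟨x, hx⟩
    rw [fwd'_eq] at hx
    simp_all

instance : IsEmpty (Bwd Gex Pex) := by rw [bwd_eq]; exact Set.instIsEmptyElemEmptyCollection _

instance : IsEmpty (Bwd Gex' Pex') := by rw [bwd'_eq]; exact Set.instIsEmptyElemEmptyCollection _

def hex : Bwd Gex' Pex' ≃ Bwd Gex Pex := Equiv.equivOfIsEmpty _ _

lemma reach_Gex : ∀ b, Gex.Reach 0 b → b = 0 ∨ b = 2 := by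
  intro b hb
  induction hb with
  | refl => left; rfl
  | tail _ he ih =>
      rename_i c d _
      simp [Gex] at he
      right; exact he.2

lemma reach_Gex' : ∀ b, Gex'.Reach 3 b → b = 3 := by
  intro b hb
  induction hb with
  | refl => rfl
  | tail _ he ih =>
      rename_i c d _
      simp [Gex'] at he
      omega

end Stmt15Aux

/-- there are two non-informative IOD graphs with crossover
compatible IO partitions and a crossover membrane whose crossover child is
fully informative. -/
theorem noninformative_parents_can_yield_fully_informative_child :
    ∃ (V : Type) (G G' : IODGraph V) (P : IOPartition G) (P' : IOPartition G')
      (g : Fwd G P ≃ Fwd G' P') (h : Bwd G' P' ≃ Bwd G P),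
      NonInformative G ∧ NonInformative G' ∧
      CrossCompat G G' P P' ∧
      (∀ i ∈ G.I, ∀ o' ∈ G'.O, childReach G G' P P' g h i o') := by
  refine ⟨ℕ, Gex, Gex', Pex, Pex', gex, hex, ?_, ?_, ?_, ?_⟩
  · intro i hi o ho hr
    simp [Gex] at hi ho
    subst hi; subst ho
    rcases reach_Gex 1 hr with h | h <;> omega
  · intro i hi o ho hr
    simp [Gex'] at hi ho
    subst hi; subst ho
    have := reach_Gex' 4 hr
    omega
  · refine ⟨?_, ?_, ?_, ?_, ?_, ?_, ?_, ?_⟩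
    · ext x; simp [Pex, Pex']
    · ext x; simp [Pex, Pex']; aesop
    · rw [fwd_eq]; exact Set.finite_singleton _
    · rw [fwd'_eq]; exact Set.finite_singleton _
    · rw [bwd_eq]; exact Set.finite_empty
    · rw [bwd'_eq]; exact Set.finite_empty
    · rw [fwd_eq, fwd'_eq]; simp
    · rw [bwd_eq, bwd'_eq]
  · intro i hi o' ho'
    simp [Gex] at hi
    simp [Gex'] at ho'
    subst hi; subst ho'
    apply Relation.ReflTransGen.single
    apply Set.mem_union_right
    apply Set.mem_union_left
    exact ⟨⟨(0, 2), mem_fwd⟩, rfl⟩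
end
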